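/- Fix ρ ∈ [0,1] and r ∈ (−1, ∞) with r ≠ 0. Let Z_0, Z_1, Z_2, … be i.i.d. standard normal random variables and set p_i = Φ(−√ρ·Z_0 − √(1−ρ)·Z_i) for i ≥ 1. Let C ∈ ℝ satisfy Pr( g_{ρ,r}(Z_0) = C ) = 0, where sign(r) = 1 if r > 0 and −1 if r < 0. Then lim_{m→∞} Pr( sign(r)·(1/m) Σ_{i=1}^m p_i^r ≤ sign(r)·C ) = Pr( sign(r)·g_{ρ,r}(Z_0) ≤ sign(r)·C ). -/

import Mathlib

open MeasureTheory ProbabilityTheory Filter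
open scoped ENNReal

/-- Standard normal CDF `Φ`. -/
noncomputable def Phi (x : ℝ) : ℝ := ((gaussianReal 0 1 : Measure ℝ) (Set.Iic x)).toReal

/-- `g_{ρ,r}(z) = E[p₁^r | Z₀ = z] = ∫ Φ(-√ρ z - √(1-ρ) x)^r φ(x) dx`. -/
noncomputable def gFun (ρ r z : ℝ) : ℝ :=
  ∫ x : ℝ, Phi (-(Real.sqrt ρ * z) - Real.sqrt (1 - ρ) * x) ^ r
    ∂(gaussianReal 0 1 : Measure ℝ)



lemma Phi_mono : Monotone Phi := fun a b hab =>
  ENNReal.toReal_mono (measure_ne_top _ _) (measure_mono (Set.Iic_subset_Iic.2 hab))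

lemma Phi_measurable : Measurable Phi := Phi_mono.measurable

lemma Phi_nonneg (x : ℝ) : 0 ≤ Phi x := ENNReal.toReal_nonneg

lemma Phi_le_one (x : ℝ) : Phi x ≤ 1 := by
  have h := prob_le_one (μ := (gaussianReal 0 1 : Measure ℝ)) (s := Set.Iic x)
  simpa [Phi] using ENNReal.toReal_mono ENNReal.one_ne_top h

lemma Phi_pos (x : ℝ) : 0 < Phi x := by
  refine ENNReal.toReal_pos (fun h0 => ?_) (measure_ne_top _ _)
  have := gaussianReal_absolutelyContinuous' 0 (v := 1) one_ne_zero h0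
  simp [Real.volume_Iic] at this

lemma Phi_eq_integral (x : ℝ) : Phi x = ∫ t in Set.Iic x, gaussianPDFReal 0 1 t := by
  rw [Phi, gaussianReal_apply_eq_integral 0 one_ne_zero, ENNReal.toReal_ofReal]
  exact setIntegral_nonneg measurableSet_Iic fun t _ => gaussianPDFReal_nonneg _ _ _

lemma Phi_ge (u : ℝ) :
    (Real.sqrt (2 * Real.pi))⁻¹ * Real.exp (-(|u| + 1) ^ 2 / 2) ≤ Phi u := by
  rw [Phi_eq_integral]
  have h1 : ∫ t in Set.Icc (u - 1) u, ((Real.sqrt (2 * Real.pi))⁻¹ * Real.exp (-(|u| + 1) ^ 2 / 2)) ≤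
      ∫ t in Set.Icc (u - 1) u, gaussianPDFReal 0 1 t := by
    refine setIntegral_mono_on (integrableOn_const (by simp [Real.volume_Icc]))
      ((integrable_gaussianPDFReal 0 1).integrableOn) measurableSet_Icc fun t ht => ?_
    rw [gaussianPDFReal]
    push_cast
    simp only [sub_zero, mul_one]
    refine mul_le_mul_of_nonneg_left (Real.exp_le_exp.mpr ?_) (by positivity)
    have h2 : |t| ≤ |u| + 1 := by
      rw [abs_le]; cases' abs_cases u with h h <;> constructor <;> nlinarith [ht.1, ht.2]
    have h4 : t ^ 2 ≤ (|u| + 1) ^ 2 := by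
      calc t ^ 2 = |t| ^ 2 := (sq_abs t).symm
      _ ≤ (|u| + 1) ^ 2 := by nlinarith [abs_nonneg t]
    linarith
  have h3 : ∫ t in Set.Icc (u - 1) u, ((Real.sqrt (2 * Real.pi))⁻¹ * Real.exp (-(|u| + 1) ^ 2 / 2))
      = (Real.sqrt (2 * Real.pi))⁻¹ * Real.exp (-(|u| + 1) ^ 2 / 2) := by
    rw [setIntegral_const]
    rw [measureReal_def, Real.volume_Icc]
    simp
  rw [← h3]
  refine h1.trans (setIntegral_mono_set (integrable_gaussianPDFReal 0 1).integrableOn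
    (ae_of_all _ fun t => gaussianPDFReal_nonneg _ _ _) (HasSubset.Subset.eventuallyLE ?_))
  exact fun t ht => le_trans ht.2 le_rfl
lemma Phi_rpow_measurable (r : ℝ) : Measurable fun t => Phi t ^ r := by
  have : (fun t => Phi t ^ r) = fun t => Real.exp (Real.log (Phi t) * r) := by
    funext t; rw [Real.rpow_def_of_pos (Phi_pos t)]
  rw [this]
  exact Real.measurable_exp.comp ((Real.measurable_log.comp Phi_measurable).mul_const r)

lemma integrable_exp_sq_gaussian {c : ℝ} (hc : c < 1/2) :
    Integrable (fun x => Real.exp (c * x ^ 2)) (gaussianReal 0 1 : Measure ℝ) := by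
  rw [gaussianReal_of_var_ne_zero 0 one_ne_zero]
  rw [integrable_withDensity_iff (measurable_gaussianPDF 0 1)
    (ae_of_all _ fun x => ENNReal.ofReal_lt_top)]
  have heq : (fun x => Real.exp (c * x ^ 2) * ((gaussianPDF 0 1 x).toReal))
      = fun x => (Real.sqrt (2 * Real.pi))⁻¹ * Real.exp (-(1/2 - c) * x ^ 2) := by
    funext x
    rw [gaussianPDF, ENNReal.toReal_ofReal (gaussianPDFReal_nonneg _ _ _), gaussianPDFReal]
    push_cast
    rw [mul_one, mul_comm (Real.exp _), mul_assoc, ← Real.exp_add]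
    ring_nf
  rw [heq]
  exact ((integrable_exp_neg_mul_sq (by linarith)).const_mul _)

lemma integrable_f {ρ r : ℝ} (hρ : ρ ∈ Set.Icc (0:ℝ) 1) (hr : -1 < r) (z : ℝ) :
    Integrable (fun x => Phi (-(Real.sqrt ρ * z) - Real.sqrt (1 - ρ) * x) ^ r)
      (gaussianReal 0 1 : Measure ℝ) := by
  have hm : Measurable fun x => Phi (-(Real.sqrt ρ * z) - Real.sqrt (1 - ρ) * x) ^ r :=
    (Phi_rpow_measurable r).comp
      (measurable_const.sub (measurable_id.const_mul (Real.sqrt (1 - ρ))))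
  rcases lt_or_ge r 0 with hneg | hpos
  · obtain ⟨s, hs0⟩ : ∃ s : ℝ, s = -r := ⟨_, rfl⟩
    have hs : 0 < s := by rw [hs0]; linarith
    have hs1 : s < 1 := by rw [hs0]; linarith
    obtain ⟨B, hBdef⟩ : ∃ B : ℝ, B = Real.sqrt ρ * |z| + 1 := ⟨_, rfl⟩
    have hB : 1 ≤ B := by
      have : 0 ≤ Real.sqrt ρ * |z| := mul_nonneg (Real.sqrt_nonneg _) (abs_nonneg _)
      rw [hBdef]; linarith
    obtain ⟨c, hcdef⟩ : ∃ c : ℝ, c = (1 + s)/4 := ⟨_, rfl⟩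
    have hc : c < 1/2 := by rw [hcdef]; linarith
    obtain ⟨D, hDdef⟩ : ∃ D : ℝ, D = s*B^2/2 + s^2*B^2/(1-s) := ⟨_, rfl⟩
    obtain ⟨K, hKdef⟩ : ∃ K : ℝ, K = ((Real.sqrt (2*Real.pi))⁻¹) ^ r * Real.exp D := ⟨_, rfl⟩
    refine ((integrable_exp_sq_gaussian hc).const_mul K).mono' hm.aestronglyMeasurable
      (ae_of_all _ fun x => ?_)
    obtain ⟨u, hu⟩ : ∃ u : ℝ, u = -(Real.sqrt ρ * z) - Real.sqrt (1 - ρ) * x := ⟨_, rfl⟩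
    rw [show -(Real.sqrt ρ * z) - Real.sqrt (1 - ρ) * x = u from hu.symm]
    have h1 : Phi u ^ r ≤ ((Real.sqrt (2*Real.pi))⁻¹ * Real.exp (-(|u|+1)^2/2)) ^ r :=
      Real.rpow_le_rpow_of_nonpos (by positivity) (Phi_ge u) hneg.le
    have h2 : ((Real.sqrt (2*Real.pi))⁻¹ * Real.exp (-(|u|+1)^2/2)) ^ r
        = ((Real.sqrt (2*Real.pi))⁻¹) ^ r * Real.exp ((-(|u|+1)^2/2) * r) := by
      rw [Real.mul_rpow (by positivity) (Real.exp_nonneg _),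
        Real.rpow_def_of_pos (Real.exp_pos _), Real.log_exp]
    have h3 : (-(|u|+1)^2/2) * r = s * (|u|+1)^2/2 := by rw [hs0]; ring
    have hab : |u| + 1 ≤ B + |x| := by
      have e1 : |u| ≤ |Real.sqrt ρ * z| + |Real.sqrt (1-ρ) * x| := by
        rw [hu, sub_eq_add_neg]
        exact (abs_add_le _ _).trans (by rw [abs_neg, abs_neg])
      have e2 : |Real.sqrt ρ * z| = Real.sqrt ρ * |z| := by
        rw [abs_mul, abs_of_nonneg (Real.sqrt_nonneg _)]
      have e3 : |Real.sqrt (1-ρ) * x| ≤ |x| := by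
        rw [abs_mul, abs_of_nonneg (Real.sqrt_nonneg _)]
        refine mul_le_of_le_one_left (abs_nonneg _) ?_
        exact Real.sqrt_le_one.mpr (by linarith [hρ.1])
      have e1' : |u| ≤ Real.sqrt ρ * |z| + |x| := by rw [← e2]; linarith
      rw [hBdef]; linarith
    have h7 : 0 < 1 - s := by linarith
    obtain ⟨a, ha, hax⟩ : ∃ a : ℝ, 0 ≤ a ∧ a = |x| := ⟨|x|, abs_nonneg x, rfl⟩
    have hx2 : x^2 = a^2 := by rw [hax, sq_abs]
    have h8 : s*B*a ≤ (1-s)/4 * a^2 + s^2*B^2/(1-s) := by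
      rw [← sub_le_iff_le_add']
      rw [le_div_iff₀ h7]
      nlinarith [sq_nonneg ((1-s)*a - 2*s*B)]
    have key : s * (|u|+1)^2/2 ≤ c * x^2 + D := by
      have h5 : (|u|+1)^2 ≤ (B + a)^2 := by
        rw [hax]; nlinarith [abs_nonneg u, abs_nonneg x]
      have h5' : s * (|u|+1)^2/2 ≤ s * (B+a)^2/2 := by
        have := mul_le_mul_of_nonneg_left h5 hs.le
        linarith
      have h6 : s*(B+a)^2/2 ≤ c*x^2 + D := by
        rw [hcdef, hDdef, hx2]
        have hexp : s*(B+a)^2/2 = s*B^2/2 + s*B*a + s*a^2/2 := by ring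
        linarith
      linarith
    have hnn : 0 ≤ Phi u ^ r := Real.rpow_nonneg (Phi_nonneg _) r
    rw [Real.norm_eq_abs, abs_of_nonneg hnn]
    calc Phi u ^ r ≤ ((Real.sqrt (2*Real.pi))⁻¹) ^ r * Real.exp (s * (|u|+1)^2/2) := by
          rw [← h3]; rw [h2] at h1; exact h1
      _ ≤ ((Real.sqrt (2*Real.pi))⁻¹) ^ r * Real.exp (c * x^2 + D) := by
          refine mul_le_mul_of_nonneg_left (Real.exp_le_exp.mpr key) ?_
          exact Real.rpow_nonneg (by positivity) r
      _ = K * Real.exp (c * x^2) := by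
          rw [hKdef, Real.exp_add]; ring
  · refine (integrable_const (1:ℝ)).mono' hm.aestronglyMeasurable (ae_of_all _ fun x => ?_)
    rw [Real.norm_eq_abs, abs_of_nonneg (Real.rpow_nonneg (Phi_nonneg _) r)]
    exact Real.rpow_le_one (Phi_nonneg _) (Phi_le_one _) hpos
lemma measurable_F (ρ r : ℝ) :
    Measurable fun p : ℝ × ℝ => Phi (-(Real.sqrt ρ * p.1) - Real.sqrt (1 - ρ) * p.2) ^ r :=
  (Phi_rpow_measurable r).comp
    (((measurable_fst.const_mul _).neg).sub (measurable_snd.const_mul _))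

lemma gFun_measurable (ρ r : ℝ) : Measurable (gFun ρ r) := by
  have h := (measurable_F ρ r).stronglyMeasurable.integral_prod_right'
    (ν := (gaussianReal 0 1 : Measure ℝ))
  exact h.measurable

lemma tendsto_measure_le_of_ae_tendsto {Ω : Type*} [MeasurableSpace Ω] (μ : Measure Ω)
    [IsProbabilityMeasure μ] (W : ℕ → Ω → ℝ) (V : Ω → ℝ) (c : ℝ)
    (hWm : ∀ m, Measurable (W m)) (hVm : Measurable V)
    (hae : ∀ᵐ ω ∂μ, Tendsto (fun m => W m ω) atTop (nhds (V ω)))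
    (hne : ∀ᵐ ω ∂μ, V ω ≠ c) :
    Tendsto (fun m => μ {ω | W m ω ≤ c}) atTop (nhds (μ {ω | V ω ≤ c})) := by
  have hA : ∀ m, MeasurableSet {ω | W m ω ≤ c} := fun m => measurableSet_le (hWm m) measurable_const
  have hAinf : MeasurableSet {ω | V ω ≤ c} := measurableSet_le hVm measurable_const
  have key : ∀ᵐ ω ∂μ, Tendsto (fun m => Set.indicator {ω' | W m ω' ≤ c} (1 : Ω → ℝ≥0∞) ω)
      atTop (nhds (Set.indicator {ω' | V ω' ≤ c} (1 : Ω → ℝ≥0∞) ω)) := by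
    filter_upwards [hae, hne] with ω hT hv
    rcases lt_or_gt_of_ne hv with h | h
    · have hev : ∀ᶠ m in atTop, W m ω < c := hT.eventually_lt_const h
      have h1 : Set.indicator {ω' | V ω' ≤ c} (1 : Ω → ℝ≥0∞) ω = 1 :=
        Set.indicator_of_mem (by exact h.le) 1
      rw [h1]
      refine Tendsto.congr' ?_ tendsto_const_nhds
      filter_upwards [hev] with m hm
      exact (Set.indicator_of_mem (by exact hm.le) 1).symm
    · have hev : ∀ᶠ m in atTop, c < W m ω := hT.eventually_const_lt h
      have h1 : Set.indicator {ω' | V ω' ≤ c} (1 : Ω → ℝ≥0∞) ω = 0 :=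
        Set.indicator_of_notMem (by exact not_le.mpr h) 1
      rw [h1]
      refine Tendsto.congr' ?_ tendsto_const_nhds
      filter_upwards [hev] with m hm
      exact (Set.indicator_of_notMem (by exact not_le.mpr hm) 1).symm
  have hDCT := tendsto_lintegral_of_dominated_convergence (μ := μ)
    (F := fun m => Set.indicator {ω' | W m ω' ≤ c} (1 : Ω → ℝ≥0∞))
    (f := Set.indicator {ω' | V ω' ≤ c} (1 : Ω → ℝ≥0∞)) (fun _ => 1)
    (fun m => (measurable_const (a := (1:ℝ≥0∞))).indicator (hA m))
    (fun m => ae_of_all _ fun ω => by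
      by_cases hω : ω ∈ {ω' | W m ω' ≤ c} <;>
        simp [Set.indicator_of_mem, Set.indicator_of_notMem, hω])
    (by simp) key
  simpa only [lintegral_indicator_one (hA _), lintegral_indicator_one hAinf] using hDCT

/-- in the equicorrelated Gaussian null model,
`Pr(sign(r)·(1/m)Σ_{i=1}^m p_i^r ≤ sign(r)·C) → Pr(sign(r)·g_{ρ,r}(Z₀) ≤ sign(r)·C)`
as `m → ∞`, provided `Pr(g_{ρ,r}(Z₀) = C) = 0`. -/
theorem stmt_11 {Ω : Type*} [MeasurableSpace Ω] (μ : Measure Ω) [IsProbabilityMeasure μ]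
    (ρ r : ℝ) (hρ : ρ ∈ Set.Icc (0:ℝ) 1) (hr : -1 < r) (hr0 : r ≠ 0)
    (Z : ℕ → Ω → ℝ) (hmeas : ∀ i, Measurable (Z i))
    (hindep : iIndepFun Z μ)
    (hlaw : ∀ i, μ.map (Z i) = (gaussianReal 0 1 : Measure ℝ))
    (C : ℝ) (hC : μ {ω | gFun ρ r (Z 0 ω) = C} = 0)
    (sgn : ℝ) (hsgn : sgn = if 0 < r then 1 else -1) :
    Tendsto (fun m : ℕ =>
        μ {ω | sgn * ((1 / m : ℝ) * ∑ i ∈ Finset.Icc 1 m,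
            Phi (-(Real.sqrt ρ * Z 0 ω) - Real.sqrt (1 - ρ) * Z i ω) ^ r) ≤ sgn * C})
      atTop
      (nhds (μ {ω | sgn * gFun ρ r (Z 0 ω) ≤ sgn * C})) := by
  classical
  have hsgn0 : sgn ≠ 0 := by rw [hsgn]; split <;> norm_num
  set F : ℝ × ℝ → ℝ :=
    fun p => Phi (-(Real.sqrt ρ * p.1) - Real.sqrt (1 - ρ) * p.2) ^ r with hFdef
  have hFm : Measurable F := measurable_F ρ r
  set S : Ω → ℕ → ℝ := fun ω n => Z (n+1) ω with hSdef
  have hS : Measurable S := measurable_pi_lambda _ fun n => hmeas (n+1)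
  set π : Measure (ℕ → ℝ) := μ.map S with hπdef
  haveI : IsProbabilityMeasure π := Measure.isProbabilityMeasure_map hS.aemeasurable
  set Y : Ω → ℝ × (ℕ → ℝ) := fun ω => (Z 0 ω, S ω) with hYdef
  have hY : Measurable Y := (hmeas 0).prodMk hS
  -- independence of Z 0 and S
  have hIndep : Indep (MeasurableSpace.comap (Z 0) inferInstance)
      (⨆ i ∈ ({0}ᶜ : Set ℕ), MeasurableSpace.comap (Z i) inferInstance) μ := by
    have h := indep_biSup_compl (fun n => (hmeas n).comap_le) hindep ({0} : Set ℕ)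
    have h0 : (⨆ n ∈ ({0} : Set ℕ), MeasurableSpace.comap (Z n) inferInstance)
        = MeasurableSpace.comap (Z 0) inferInstance := by simp
    rw [h0] at h
    exact h
  have hSmeas' : ∀ {t : Set (ℕ → ℝ)}, MeasurableSet t →
      MeasurableSet[⨆ i ∈ ({0}ᶜ : Set ℕ), MeasurableSpace.comap (Z i) inferInstance]
        (S ⁻¹' t) := by
    intro t ht
    have hM : @Measurable Ω (ℕ → ℝ)
        (⨆ i ∈ ({0}ᶜ : Set ℕ), MeasurableSpace.comap (Z i) inferInstance) _ S := by
      letI : MeasurableSpace Ω :=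
        ⨆ i ∈ ({0}ᶜ : Set ℕ), MeasurableSpace.comap (Z i) inferInstance
      refine measurable_pi_lambda _ fun n => ?_
      have h1 : @Measurable Ω ℝ (MeasurableSpace.comap (Z (n+1)) inferInstance) _ (Z (n+1)) :=
        Measurable.of_comap_le le_rfl
      refine h1.mono ?_ le_rfl
      exact le_biSup (fun i => MeasurableSpace.comap (Z i) inferInstance)
        (show (n+1) ∈ ({0}ᶜ : Set ℕ) by simp)
    exact hM ht
  have hmap : μ.map Y = (gaussianReal 0 1 : Measure ℝ).prod π := by
    refine (Measure.prod_eq fun s t hs ht => ?_).symm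
    rw [Measure.map_apply hY (hs.prod ht)]
    have hpre : Y ⁻¹' (s ×ˢ t) = Z 0 ⁻¹' s ∩ S ⁻¹' t := rfl
    rw [hpre, (Indep_iff _ _ _).1 hIndep _ _ ⟨s, hs, rfl⟩ (hSmeas' ht),
      ← Measure.map_apply (hmeas 0) hs, hlaw 0, ← Measure.map_apply hS ht]
  -- laws of coordinates under π
  have hevallaw : ∀ n : ℕ, π.map (fun y => y n) = (gaussianReal 0 1 : Measure ℝ) := by
    intro n
    rw [hπdef, Measure.map_map (measurable_pi_apply n) hS]
    exact hlaw (n+1)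
  -- coordinates are independent under π
  have hcoord : iIndepFun
      (fun n (y : ℕ → ℝ) => y n) π := by
    rw [iIndepFun_iff_measure_inter_preimage_eq_mul]
    intro T sets hsets
    have hL : π (⋂ i ∈ T, (fun y : ℕ → ℝ => y i) ⁻¹' sets i)
        = μ (⋂ i ∈ T, Z (i+1) ⁻¹' sets i) := by
      rw [hπdef, Measure.map_apply hS (T.measurableSet_biInter
        fun i hi => measurable_pi_apply i (hsets i hi))]
      congr 1
      ext ω
      simp [hSdef]
    have hR : ∀ i ∈ T, π ((fun y : ℕ → ℝ => y i) ⁻¹' sets i) = μ (Z (i+1) ⁻¹' sets i) := by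
      intro i hi
      rw [hπdef, Measure.map_apply hS (measurable_pi_apply i (hsets i hi))]
      rfl
    rw [hL, Finset.prod_congr rfl hR]
    set e : ℕ ↪ ℕ := ⟨fun n => n + 1, add_left_injective 1⟩ with hedef
    have H := hindep.measure_inter_preimage_eq_mul (T.map e)
      (sets := fun j => if j = 0 then Set.univ else sets (j - 1))
      (fun j hj => by
        rcases Finset.mem_map.mp hj with ⟨i, hi, rfl⟩
        simp only [hedef, Function.Embedding.coeFn_mk]
        rw [if_neg (Nat.succ_ne_zero i)]
        simpa using hsets i hi)
    have hL' : (⋂ j ∈ T.map e, Z j ⁻¹' (if j = 0 then Set.univ else sets (j-1)))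
        = ⋂ i ∈ T, Z (i+1) ⁻¹' sets i := by
      ext ω
      simp only [Set.mem_iInter, Finset.mem_map, hedef, Function.Embedding.coeFn_mk]
      constructor
      · intro h i hi
        have := h (i+1) ⟨i, hi, rfl⟩
        simpa using this
      · rintro h j ⟨i, hi, rfl⟩
        simpa using h i hi
    rw [hL', Finset.prod_map] at H
    rw [H]
    exact Finset.prod_congr rfl fun i hi => by simp [hedef]
  -- strong law for each fixed z
  have hSLLN : ∀ z : ℝ, ∀ᵐ y ∂π, Tendsto
      (fun n : ℕ => (∑ i ∈ Finset.range n, F (z, y i)) / n) atTop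
      (nhds (gFun ρ r z)) := by
    intro z
    have hfzm : Measurable (fun x : ℝ => F (z, x)) :=
      hFm.comp (measurable_const.prodMk measurable_id)
    set X : ℕ → (ℕ → ℝ) → ℝ := fun i y => F (z, y i) with hXdef
    have hXm : ∀ i, X i = (fun x => F (z, x)) ∘ (fun y : ℕ → ℝ => y i) := fun i => rfl
    have hXindep : Pairwise (Function.onFun (IndepFun · · π) X) := by
      intro i j hij
      exact (hcoord.indepFun hij).comp hfzm hfzm
    have hXident : ∀ i, IdentDistrib (X i) (X 0) π π := by
      intro i
      have hev : IdentDistrib (fun y : ℕ → ℝ => y i) (fun y : ℕ → ℝ => y 0) π π :=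
        ⟨(measurable_pi_apply i).aemeasurable, (measurable_pi_apply 0).aemeasurable,
          by rw [hevallaw, hevallaw]⟩
      exact hev.comp hfzm
    have hXint : Integrable (X 0) π := by
      have h1 : Integrable (fun x => F (z, x)) (π.map (fun y : ℕ → ℝ => y 0)) := by
        rw [hevallaw 0]
        exact integrable_f hρ hr z
      exact (integrable_map_measure hfzm.aestronglyMeasurable
        (measurable_pi_apply 0).aemeasurable).1 h1
    have hmean : ∫ y, X 0 y ∂π = gFun ρ r z := by
      have h2 := integral_map (μ := π) (φ := fun y : ℕ → ℝ => y 0)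
        (measurable_pi_apply 0).aemeasurable (f := fun x : ℝ => F (z, x))
        (by rw [hevallaw 0]; exact hfzm.aestronglyMeasurable)
      rw [hevallaw 0] at h2
      exact h2.symm
    have := strong_law_ae_real X hXint hXindep hXident
    rw [hmean] at this
    exact this
  -- product-measure a.e. convergence
  set E : Set (ℝ × (ℕ → ℝ)) := {p | Tendsto
      (fun n : ℕ => (∑ i ∈ Finset.range n, F (p.1, p.2 i)) / n) atTop
      (nhds (gFun ρ r p.1))} with hEdef
  have hEm : MeasurableSet E := by
    refine measurableSet_tendsto_fun (fun n => ?_) ((gFun_measurable ρ r).comp measurable_fst)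
    exact (Finset.measurable_sum _ fun i _ =>
      hFm.comp (measurable_fst.prodMk ((measurable_pi_apply i).comp measurable_snd))).div_const _
  have hE1 : ((gaussianReal 0 1 : Measure ℝ).prod π) Eᶜ = 0 := by
    rw [Measure.prod_apply hEm.compl]
    have hz : ∀ z : ℝ, π (Prod.mk z ⁻¹' Eᶜ) = 0 := by
      intro z
      have := hSLLN z
      rw [ae_iff] at this
      convert this using 2
      rfl
    simp only [hz, lintegral_zero]
  have hae : ∀ᵐ ω ∂μ, Tendsto
      (fun n : ℕ => (∑ i ∈ Finset.range n, F (Z 0 ω, Z (i+1) ω)) / n) atTop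
      (nhds (gFun ρ r (Z 0 ω))) := by
    have h0 : μ (Y ⁻¹' Eᶜ) = 0 := by
      rw [← Measure.map_apply hY hEm.compl, hmap, hE1]
    have h1 : ∀ᵐ ω ∂μ, Y ω ∈ E := by
      rw [ae_iff]
      convert h0 using 2
      rfl
    filter_upwards [h1] with ω hω
    exact hω
  -- final step
  have hne : ∀ᵐ ω ∂μ, sgn * gFun ρ r (Z 0 ω) ≠ sgn * C := by
    rw [ae_iff]
    have hss : {ω | ¬ sgn * gFun ρ r (Z 0 ω) ≠ sgn * C} = {ω | gFun ρ r (Z 0 ω) = C} := by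
      ext ω
      simp only [Set.mem_setOf_eq, not_not]
      exact ⟨fun h => mul_left_cancel₀ hsgn0 h, fun h => by rw [h]⟩
    rw [hss, hC]
  have haeW : ∀ᵐ ω ∂μ, Tendsto (fun m : ℕ => sgn * ((1 / m : ℝ) * ∑ i ∈ Finset.Icc 1 m,
      Phi (-(Real.sqrt ρ * Z 0 ω) - Real.sqrt (1 - ρ) * Z i ω) ^ r)) atTop
      (nhds (sgn * gFun ρ r (Z 0 ω))) := by
    filter_upwards [hae] with ω hT
    have h2 := hT.const_mul sgn
    refine h2.congr fun m => ?_
    congr 1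
    rw [← Finset.Ico_add_one_right_eq_Icc, Finset.sum_Ico_eq_sum_range, Nat.add_sub_cancel,
      one_div, inv_mul_eq_div]
    congr 1
    refine Finset.sum_congr rfl fun i _ => ?_
    simp only [hFdef]
    rw [add_comm 1 i]
  have hWmeas : ∀ m : ℕ, Measurable (fun ω => sgn * ((1 / m : ℝ) * ∑ i ∈ Finset.Icc 1 m,
      Phi (-(Real.sqrt ρ * Z 0 ω) - Real.sqrt (1 - ρ) * Z i ω) ^ r)) := by
    intro m
    exact ((Finset.measurable_sum _ fun i _ =>
      hFm.comp ((hmeas 0).prodMk (hmeas i))).const_mul _).const_mul _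
  exact tendsto_measure_le_of_ae_tendsto μ _ _ _ hWmeas
    (((gFun_measurable ρ r).comp (hmeas 0)).const_mul sgn) haeW hne
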